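/- (Matroid partition theorem of Edmonds) Let (E,Fᵢ), i=1,...,m, be matroids on the same finite set E with rank functions rᵢ. If every subset A ⊆ E satisfies |A| ≤ Σᵢ rᵢ(A), then E can be partitioned into sets I₁,...,I_m with Iᵢ ∈ Fᵢ. -/

import Mathlib

/-- A matroid in the sense of the paper. -/
structure PaperMatroid (α : Type*) [DecidableEq α] [Fintype α] where
  Indep : Finset α → Prop
  nonempty : ∃ I, Indep I
  subset_closed : ∀ ⦃I J : Finset α⦄, Indep I → J ⊆ I → Indep J
  max_card_eq : ∀ (A I₁ I₂ : Finset α),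
    I₁ ⊆ A → Indep I₁ → (∀ J, J ⊆ A → Indep J → I₁ ⊆ J → J = I₁) →
    I₂ ⊆ A → Indep I₂ → (∀ J, J ⊆ A → Indep J → I₂ ⊆ J → J = I₂) →
    I₁.card = I₂.card

/-- `I` is a maximal independent subset of `A`. -/
def PaperMatroid.MaxIndepIn {α : Type*} [DecidableEq α] [Fintype α]
    (M : PaperMatroid α) (A I : Finset α) : Prop :=
  I ⊆ A ∧ M.Indep I ∧ ∀ J, J ⊆ A → M.Indep J → I ⊆ J → J = I

open Finset

namespace PaperMatroid

variable {α : Type*} [DecidableEq α] [Fintype α] (M : PaperMatroid α)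

theorem indep_empty : M.Indep ∅ := by
  obtain ⟨I, hI⟩ := M.nonempty
  exact M.subset_closed hI (empty_subset I)

theorem exists_maxIndepIn_extending (A I : Finset α) (hIA : I ⊆ A) (hI : M.Indep I) :
    ∃ J, I ⊆ J ∧ M.MaxIndepIn A J := by
  classical
  set s := A.powerset.filter (fun J => M.Indep J ∧ I ⊆ J) with hs
  have hne : s.Nonempty := ⟨I, by simp [hs, hIA, hI]⟩
  obtain ⟨J, hJmem, hJmax⟩ := s.exists_max_image Finset.card hne
  simp only [hs, mem_filter, mem_powerset] at hJmem
  refine ⟨J, hJmem.2.2, hJmem.1, hJmem.2.1, ?_⟩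
  intro K hKA hKind hJK
  have hKmem : K ∈ s := by simp [hs, hKA, hKind, hJmem.2.2.trans hJK]
  exact (Finset.eq_of_subset_of_card_le hJK (hJmax K hKmem)).symm

theorem exists_maxIndepIn (A : Finset α) : ∃ J, M.MaxIndepIn A J := by
  obtain ⟨J, _, hJ⟩ := M.exists_maxIndepIn_extending A ∅ (empty_subset A) M.indep_empty
  exact ⟨J, hJ⟩

noncomputable def rank (A : Finset α) : ℕ := (M.exists_maxIndepIn A).choose.card

theorem MaxIndepIn.card_eq_rank {M : PaperMatroid α} {A I : Finset α}
    (h : M.MaxIndepIn A I) : I.card = M.rank A := by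
  have h' := (M.exists_maxIndepIn A).choose_spec
  exact M.max_card_eq A I _ h.1 h.2.1 h.2.2 h'.1 h'.2.1 h'.2.2

theorem card_le_rank {A I : Finset α} (hIA : I ⊆ A) (hI : M.Indep I) : I.card ≤ M.rank A := by
  obtain ⟨J, hIJ, hJ⟩ := M.exists_maxIndepIn_extending A I hIA hI
  calc I.card ≤ J.card := Finset.card_le_card hIJ
    _ = M.rank A := hJ.card_eq_rank

theorem rank_mono {A B : Finset α} (hAB : A ⊆ B) : M.rank A ≤ M.rank B := by
  obtain ⟨J, hJ⟩ := M.exists_maxIndepIn A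
  rw [← hJ.card_eq_rank]
  exact M.card_le_rank (hJ.1.trans hAB) hJ.2.1

theorem rank_empty : M.rank ∅ = 0 := by
  obtain ⟨J, hJ⟩ := M.exists_maxIndepIn (∅ : Finset α)
  rw [← hJ.card_eq_rank, Finset.subset_empty.mp hJ.1, Finset.card_empty]

theorem indep_singleton_of_one_le_rank {e : α} (h1 : 1 ≤ M.rank {e}) : M.Indep {e} := by
  obtain ⟨J, hJ⟩ := M.exists_maxIndepIn {e}
  have hcard : 1 ≤ J.card := by rw [hJ.card_eq_rank]; exact h1
  have : J = {e} := Finset.eq_of_subset_of_card_le hJ.1 (by simpa using hcard)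
  exact this ▸ hJ.2.1

theorem rank_submodular (X Y : Finset α) :
    M.rank (X ∪ Y) + M.rank (X ∩ Y) ≤ M.rank X + M.rank Y := by
  obtain ⟨B, hB⟩ := M.exists_maxIndepIn (X ∩ Y)
  obtain ⟨C, hBC, hC⟩ := M.exists_maxIndepIn_extending (X ∪ Y) B
    (hB.1.trans inter_subset_union) hB.2.1
  have hCXY : C ∩ (X ∩ Y) = B := by
    refine hB.2.2 _ (inter_subset_right) (M.subset_closed hC.2.1 inter_subset_left) ?_
    exact subset_inter hBC hB.1
  have hCunion : C ∩ X ∪ C ∩ Y = C := by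
    rw [← inter_union_distrib_left]
    exact inter_eq_left.mpr hC.1
  have hCinter : (C ∩ X) ∩ (C ∩ Y) = B := by
    rw [inter_inter_inter_comm, inter_self]; exact hCXY
  have key : (C ∩ X).card + (C ∩ Y).card = C.card + B.card := by
    rw [← Finset.card_union_add_card_inter, hCunion, hCinter]
  have h1 : (C ∩ X).card ≤ M.rank X :=
    M.card_le_rank inter_subset_right (M.subset_closed hC.2.1 inter_subset_left)
  have h2 : (C ∩ Y).card ≤ M.rank Y :=
    M.card_le_rank inter_subset_right (M.subset_closed hC.2.1 inter_subset_left)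
  rw [← hC.card_eq_rank, ← hB.card_eq_rank]
  omega


/-- If `I` is maximal among sets with `e ∉ J` and `insert e J` independent inside `A`,
then `insert e I` is maximal independent in `insert e A`. -/
theorem maxIndepIn_insert_of_contract_max {M : PaperMatroid α} {e : α} {A I : Finset α}
    (heI : e ∉ I) (hIA : I ⊆ A) (hind : M.Indep (insert e I))
    (hmax : ∀ J, J ⊆ A → (e ∉ J ∧ M.Indep (insert e J)) → I ⊆ J → J = I) :
    M.MaxIndepIn (insert e A) (insert e I) := by
  refine ⟨insert_subset_insert e hIA, hind, ?_⟩
  intro J hJsub hJind hIJ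
  have heJ : e ∈ J := hIJ (mem_insert_self e I)
  have h1 : J.erase e ⊆ A := by
    intro x hx
    rcases mem_insert.mp (hJsub (mem_of_mem_erase hx)) with h | h
    · exact absurd h (ne_of_mem_erase hx)
    · exact h
  have h3 : M.Indep (insert e (J.erase e)) := by rw [insert_erase heJ]; exact hJind
  have h4 : I ⊆ J.erase e := fun x hx =>
    mem_erase.mpr ⟨fun hxe => heI (hxe ▸ hx), hIJ (mem_insert_of_mem hx)⟩
  have h5 := hmax _ h1 ⟨notMem_erase e J, h3⟩ h4
  rw [← insert_erase heJ, h5]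

/-- Contraction of a matroid by a non-loop element. -/
def contract (M : PaperMatroid α) (e : α) (he : M.Indep {e}) : PaperMatroid α where
  Indep I := e ∉ I ∧ M.Indep (insert e I)
  nonempty := ⟨∅, notMem_empty e, by simpa using he⟩
  subset_closed := fun I J hI hJI =>
    ⟨fun h => hI.1 (hJI h), M.subset_closed hI.2 (insert_subset_insert e hJI)⟩
  max_card_eq := by
    intro A I₁ I₂ h1A h1i h1m h2A h2i h2m
    have m1 := maxIndepIn_insert_of_contract_max h1i.1 h1A h1i.2 h1m
    have m2 := maxIndepIn_insert_of_contract_max h2i.1 h2A h2i.2 h2m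
    have := M.max_card_eq (insert e A) (insert e I₁) (insert e I₂)
      m1.1 m1.2.1 m1.2.2 m2.1 m2.2.1 m2.2.2
    rwa [card_insert_of_notMem h1i.1, card_insert_of_notMem h2i.1,
      Nat.add_right_cancel_iff] at this

theorem contract_indep_iff {M : PaperMatroid α} {e : α} {he : M.Indep {e}} {I : Finset α} :
    (M.contract e he).Indep I ↔ e ∉ I ∧ M.Indep (insert e I) := Iff.rfl

theorem rank_insert_eq_contract_rank_add_one (M : PaperMatroid α) (e : α) (he : M.Indep {e})
    (A : Finset α) : M.rank (insert e A) = (M.contract e he).rank A + 1 := by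
  obtain ⟨I, hI⟩ := (M.contract e he).exists_maxIndepIn A
  have hind := (contract_indep_iff.mp hI.2.1)
  have hm := maxIndepIn_insert_of_contract_max hind.1 hI.1 hind.2
    (fun J hJ hJi hIJ => hI.2.2 J hJ hJi hIJ)
  rw [← hm.card_eq_rank, ← hI.card_eq_rank, card_insert_of_notMem hind.1]

theorem aux_partition {α : Type*} [DecidableEq α] [Fintype α] (m n : ℕ) (E : Finset α)
    (hE : E.card ≤ n) (Ms : Fin m → PaperMatroid α)
    (h : ∀ A ⊆ E, A.card ≤ ∑ i, (Ms i).rank A) :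
    ∃ I : Fin m → Finset α,
      (∀ i j, i ≠ j → Disjoint (I i) (I j)) ∧
      (∀ a ∈ E, ∃ i, a ∈ I i) ∧ (∀ i, I i ⊆ E) ∧ (∀ i, (Ms i).Indep (I i)) := by
  induction n generalizing E Ms with
  | zero =>
      obtain rfl : E = ∅ := card_eq_zero.mp (Nat.le_zero.mp hE)
      exact ⟨fun _ => ∅, fun i j _ => disjoint_empty_left _, by simp,
        fun i => Subset.rfl, fun i => (Ms i).indep_empty⟩
  | succ n ih =>
      rcases E.eq_empty_or_nonempty with rfl | ⟨e, he⟩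
      · exact ⟨fun _ => ∅, fun i j _ => disjoint_empty_left _, by simp,
          fun i => Subset.rfl, fun i => (Ms i).indep_empty⟩
      set E' := E.erase e with hE'def
      have hE'E : E' ⊆ E := erase_subset e E
      have hE'card : E'.card ≤ n := by
        have h1 : E'.card = E.card - 1 := card_erase_of_mem he
        have h2 : 1 ≤ E.card := card_pos.mpr ⟨e, he⟩
        omega
      have heE' : e ∉ E' := notMem_erase e E
      -- there is a "good" index i
      have hgood : ∃ i, ∀ A ⊆ E', A.card + (Ms i).rank A + 1 ≤
          (∑ j, (Ms j).rank A) + (Ms i).rank (insert e A) := by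
        by_contra hc
        push_neg at hc
        choose f hf1 hf2 using hc
        have hfE : ∀ i, f i ⊆ E := fun i => (hf1 i).trans hE'E
        -- tightness
        have htu : ∀ A B : Finset α, A ⊆ E → B ⊆ E →
            (∑ j, (Ms j).rank A) = A.card → (∑ j, (Ms j).rank B) = B.card →
            (∑ j, (Ms j).rank (A ∪ B)) = (A ∪ B).card := by
          intro A B hA hB tA tB
          have hsum : (∑ j, (Ms j).rank (A ∪ B)) + (∑ j, (Ms j).rank (A ∩ B)) ≤
              (∑ j, (Ms j).rank A) + (∑ j, (Ms j).rank B) := by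
            rw [← Finset.sum_add_distrib, ← Finset.sum_add_distrib]
            exact Finset.sum_le_sum (fun j _ => (Ms j).rank_submodular A B)
          have hi1 := h (A ∩ B) (inter_subset_left.trans hA)
          have hi2 := h (A ∪ B) (union_subset hA hB)
          have hcard := Finset.card_union_add_card_inter A B
          omega
        have hft : ∀ i, (∑ j, (Ms j).rank (f i)) = (f i).card ∧
            (Ms i).rank (insert e (f i)) = (Ms i).rank (f i) := by
          intro i
          have h1 := hf2 i
          have h2 := h (f i) (hfE i)
          have h3 := (Ms i).rank_mono (subset_insert e (f i))
          omega
        set T := Finset.univ.biUnion f with hTdef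
        have hT : ∀ s : Finset (Fin m), (s.biUnion f) ⊆ E' ∧
            (∑ j, (Ms j).rank (s.biUnion f)) = (s.biUnion f).card := by
          intro s
          induction s using Finset.induction_on with
          | empty =>
              simp [PaperMatroid.rank_empty]
          | @insert a s ha ihs =>
              rw [biUnion_insert]
              exact ⟨union_subset (hf1 a) ihs.1,
                htu _ _ (hfE a) (ihs.1.trans hE'E) (hft a).1 ihs.2⟩
        have hTE' : T ⊆ E' := (hT Finset.univ).1
        have hTt : (∑ j, (Ms j).rank T) = T.card := (hT Finset.univ).2
        have heT : e ∉ T := fun hmem => heE' (hTE' hmem)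
        have hrT : ∀ i, (Ms i).rank (insert e T) = (Ms i).rank T := by
          intro i
          have hfiT : f i ⊆ T := subset_biUnion_of_mem f (mem_univ i)
          have hXY : T ∪ insert e (f i) = insert e T := by
            rw [union_insert, union_eq_left.mpr hfiT]
          have hXint : T ∩ insert e (f i) = f i := by
            ext x
            simp only [mem_inter, mem_insert]
            constructor
            · rintro ⟨hxT, rfl | hx⟩
              · exact absurd hxT heT
              · exact hx
            · intro hx
              exact ⟨hfiT hx, Or.inr hx⟩
          have hsub := (Ms i).rank_submodular T (insert e (f i))
          rw [hXY, hXint] at hsub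
          have hmono := (Ms i).rank_mono (subset_insert e T)
          have := (hft i).2
          omega
        have hfin := h (insert e T) (insert_subset he (hTE'.trans hE'E))
        rw [card_insert_of_notMem heT, Finset.sum_congr rfl (fun j _ => hrT j)] at hfin
        omega
      obtain ⟨i, hi⟩ := hgood
      have hri : 1 ≤ (Ms i).rank {e} := by
        have h0 := hi ∅ (empty_subset E')
        simp [PaperMatroid.rank_empty] at h0
        simpa using h0
      have he1 : (Ms i).Indep {e} := (Ms i).indep_singleton_of_one_le_rank hri
      set Ms' := Function.update Ms i ((Ms i).contract e he1) with hMs'def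
      have hMs'i : Ms' i = (Ms i).contract e he1 := Function.update_self i _ Ms
      have hMs'j : ∀ j, j ≠ i → Ms' j = Ms j := fun j hj => Function.update_of_ne hj _ Ms
      have hcond : ∀ A ⊆ E', A.card ≤ ∑ j, (Ms' j).rank A := by
        intro A hA
        have hs1 : ∑ j, (Ms' j).rank A =
            ((Ms i).contract e he1).rank A + ∑ j ∈ Finset.univ.erase i, (Ms j).rank A := by
          rw [← Finset.add_sum_erase _ _ (mem_univ i), hMs'i]
          congr 1
          exact Finset.sum_congr rfl (fun j hj => by rw [hMs'j j (ne_of_mem_erase hj)])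
        have hs2 : ∑ j, (Ms j).rank A =
            (Ms i).rank A + ∑ j ∈ Finset.univ.erase i, (Ms j).rank A :=
          (Finset.add_sum_erase _ _ (mem_univ i)).symm
        have hc := (Ms i).rank_insert_eq_contract_rank_add_one e he1 A
        have hgA := hi A hA
        omega
      obtain ⟨I', hdis, hcov, hsubE, hind⟩ := ih E' hE'card Ms' hcond
      have heI' : ∀ j, e ∉ I' j := fun j hmem => heE' (hsubE j hmem)
      refine ⟨Function.update I' i (insert e (I' i)), ?_, ?_, ?_, ?_⟩
      · intro j k hjk
        by_cases hj : j = i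
        · subst hj
          rw [Function.update_self, Function.update_of_ne (Ne.symm hjk)]
          rw [Finset.disjoint_insert_left]
          exact ⟨heI' k, hdis j k hjk⟩
        · rw [Function.update_of_ne hj]
          by_cases hk : k = i
          · subst hk
            rw [Function.update_self, Finset.disjoint_insert_right]
            exact ⟨heI' j, hdis j k hjk⟩
          · rw [Function.update_of_ne hk]
            exact hdis j k hjk
      · intro a haE
        by_cases ha : a = e
        · subst ha
          exact ⟨i, by rw [Function.update_self]; exact mem_insert_self a _⟩
        · obtain ⟨j, hj⟩ := hcov a (mem_erase.mpr ⟨ha, haE⟩)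
          refine ⟨j, ?_⟩
          by_cases hji : j = i
          · subst hji
            rw [Function.update_self]
            exact mem_insert_of_mem hj
          · rwa [Function.update_of_ne hji]
      · intro j
        by_cases hji : j = i
        · subst hji
          rw [Function.update_self]
          exact insert_subset he ((hsubE j).trans hE'E)
        · rw [Function.update_of_ne hji]
          exact (hsubE j).trans hE'E
      · intro j
        by_cases hji : j = i
        · subst hji
          rw [Function.update_self]
          have := hind j
          rw [hMs'i] at this
          exact this.2
        · rw [Function.update_of_ne hji]
          have := hind j
          rwa [hMs'j j hji] at this

end PaperMatroid

/-- Edmonds'\'' matroid partition theorem (hard direction): if every `A ⊆ E` satisfies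
`|A| ≤ Σᵢ rᵢ(A)`, then `E` can be partitioned into sets `I i ∈ F i`. -/
theorem exists_partition_of_card_le_sum_rank {α : Type*} [DecidableEq α] [Fintype α]
    (m : ℕ) (Ms : Fin m → PaperMatroid α)
    (r : Fin m → Finset α → ℕ)
    (hr : ∀ i (A I : Finset α), (Ms i).MaxIndepIn A I → I.card = r i A)
    (h : ∀ A : Finset α, A.card ≤ ∑ i, r i A) :
    ∃ I : Fin m → Finset α,
      (∀ i j, i ≠ j → Disjoint (I i) (I j)) ∧
      (∀ a : α, ∃ i, a ∈ I i) ∧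
      (∀ i, (Ms i).Indep (I i)) := by
  have hrr : ∀ i A, r i A = (Ms i).rank A := by
    intro i A
    obtain ⟨J, hJ⟩ := (Ms i).exists_maxIndepIn A
    rw [← hr i A J hJ, hJ.card_eq_rank]
  have h' : ∀ A ⊆ (Finset.univ : Finset α), A.card ≤ ∑ i, (Ms i).rank A := by
    intro A _
    calc A.card ≤ ∑ i, r i A := h A
      _ = ∑ i, (Ms i).rank A := Finset.sum_congr rfl (fun i _ => hrr i A)
  obtain ⟨I, h1, h2, _, h4⟩ :=
    PaperMatroid.aux_partition m Finset.univ.card Finset.univ le_rfl Ms h'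
  exact ⟨I, h1, fun a => h2 a (mem_univ a), h4⟩
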